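/- Let A be a Hopf algebra and let L, M be left normal coideal subalgebras of A (subalgebras L with Δ(L) ⊆ A ⊗ L closed under the left adjoint action a·l = a₁ l S(a₂)). Then LM = ML as subspaces of A. -/

import Mathlib

open scoped TensorProduct
open Coalgebra

noncomputable section
namespace Burciu

variable (k : Type*) [Field k] (A : Type*) [Ring A] [HopfAlgebra k A]

/-- The left adjoint action, `adL (a ⊗ l) = a₁ * l * S(a₂)`. -/
def adL : A ⊗[k] A →ₗ[k] A :=
  (LinearMap.mul' k A) ∘ₗ
  (LinearMap.lTensor A (LinearMap.mul' k A)) ∘ₗ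
  (LinearMap.lTensor A (LinearMap.lTensor A (HopfAlgebra.antipode (R := k)))) ∘ₗ
  (LinearMap.lTensor A (TensorProduct.comm k A A).toLinearMap) ∘ₗ
  (TensorProduct.assoc k A A A).toLinearMap ∘ₗ
  (LinearMap.rTensor A (Coalgebra.comul (R := k)))

/-- The right adjoint action, `adR (a ⊗ l) = S(a₁) * l * a₂`. -/
def adR : A ⊗[k] A →ₗ[k] A :=
  (LinearMap.mul' k A) ∘ₗ
  (LinearMap.rTensor A (LinearMap.mul' k A)) ∘ₗ
  (TensorProduct.assoc k A A A).symm.toLinearMap ∘ₗ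
  (LinearMap.rTensor (A ⊗[k] A) (HopfAlgebra.antipode (R := k))) ∘ₗ
  (LinearMap.lTensor A (TensorProduct.comm k A A).toLinearMap) ∘ₗ
  (TensorProduct.assoc k A A A).toLinearMap ∘ₗ
  (LinearMap.rTensor A (Coalgebra.comul (R := k)))

variable {k A} in
/-- `L` is a left coideal subalgebra: `Δ(L) ⊆ A ⊗ L`. -/
def IsLeftCoideal (L : Subalgebra k A) : Prop :=
  ∀ l ∈ L, Coalgebra.comul (R := k) l ∈
    LinearMap.range (LinearMap.lTensor A (Subalgebra.toSubmodule L).subtype)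

variable {k A} in
/-- `L` is a left normal coideal subalgebra: a left coideal subalgebra closed
under the left adjoint action `a · l = a₁ l S(a₂)`. -/
def IsLNCS (L : Subalgebra k A) : Prop :=
  IsLeftCoideal L ∧ ∀ a : A, ∀ l ∈ L, adL k A (a ⊗ₜ[k] l) ∈ L

variable {k A} in
/-- `L` is a Hopf subalgebra: a subalgebra with `Δ(L) ⊆ L ⊗ L` and `S(L) ⊆ L`. -/
def IsHopfSubalgebra (L : Subalgebra k A) : Prop :=
  (∀ l ∈ L, Coalgebra.comul (R := k) l ∈
    LinearMap.range (TensorProduct.map (Subalgebra.toSubmodule L).subtype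
      (Subalgebra.toSubmodule L).subtype)) ∧
  ∀ l ∈ L, HopfAlgebra.antipode (R := k) l ∈ L

variable {k A} in
/-- `L` is a normal Hopf subalgebra: a Hopf subalgebra stable under both
adjoint actions. -/
def IsNormalHopfSubalgebra (L : Subalgebra k A) : Prop :=
  IsHopfSubalgebra L ∧ (∀ a : A, ∀ l ∈ L, adL k A (a ⊗ₜ[k] l) ∈ L) ∧
    (∀ a : A, ∀ l ∈ L, adR k A (a ⊗ₜ[k] l) ∈ L)

/-- The augmentation ideal `A L⁺`, where `L⁺ = L ∩ ker ε`. -/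
def ALplus (L : Subalgebra k A) : Submodule k A :=
  (⊤ : Submodule k A) *
    (Subalgebra.toSubmodule L ⊓ LinearMap.ker (Coalgebra.counit (R := k) (A := A)))

/-- The right hit action `a ↼ f = f(a₁) a₂`, as a linear endomorphism of `A`. -/
def hit (f : Module.Dual k A) : A →ₗ[k] A :=
  (TensorProduct.lid k A).toLinearMap ∘ₗ (LinearMap.rTensor A f) ∘ₗ (Coalgebra.comul (R := k))

/-- Convolution product on the dual `A*`. -/
def conv (f g : Module.Dual k A) : Module.Dual k A :=
  (LinearMap.mul' k k) ∘ₗ (TensorProduct.map f g) ∘ₗ (Coalgebra.comul (R := k))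

variable {k A} in
/-- The cocommutative elements of `A*`; for a semisimple Hopf algebra these are
exactly the span of the irreducible characters, i.e. the character ring `C(A)`. -/
def IsCocom (f : Module.Dual k A) : Prop := ∀ a b : A, f (a * b) = f (b * a)

variable {k A} in
/-- The Hopf subalgebra `(A//N)* = {f ∈ A* | f(al) = ε(l) f(a) ∀ a ∈ A, l ∈ N} ⊆ A*`
attached to a subspace `N ⊆ A`. -/
def dualQuot (N : Submodule k A) : Set (Module.Dual k A) :=
  {f | ∀ a : A, ∀ l ∈ N, f (a * l) = Coalgebra.counit (R := k) l * f a}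

/-- The axioms for an R-matrix making `(A, R)` quasitriangular. -/
structure IsRMatrix (R : A ⊗[k] A) : Prop where
  isUnit : IsUnit R
  quasi : ∀ x : A, R * (Coalgebra.comul (R := k) x) =
    (TensorProduct.comm k A A (Coalgebra.comul (R := k) x)) * R
  comul_left : LinearMap.rTensor A (Coalgebra.comul (R := k)) R =
    (LinearMap.rTensor A ((TensorProduct.mk k A A).flip 1) R) *
      (LinearMap.rTensor A (TensorProduct.mk k A A 1) R)
  comul_right : LinearMap.lTensor A (Coalgebra.comul (R := k)) R =
    (LinearMap.lTensor A (TensorProduct.mk k A A 1) R) *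
      (LinearMap.lTensor A ((TensorProduct.mk k A A).flip 1) R)
  counit_left : (TensorProduct.lid k A) (LinearMap.rTensor A (Coalgebra.counit (R := k)) R) = 1
  counit_right : (TensorProduct.rid k A) (LinearMap.lTensor A (Coalgebra.counit (R := k)) R) = 1

/-- The monodromy matrix `Q = R₂₁ R`. -/
def Qmat (R : A ⊗[k] A) : A ⊗[k] A := (TensorProduct.comm k A A R) * R

/-- The Drinfeld map `φ_R(f) = (f ⊗ id)(R₂₁ R)`. -/
def phiR (R : A ⊗[k] A) (f : Module.Dual k A) : A :=
  (TensorProduct.lid k A) (LinearMap.rTensor A f (Qmat k A R))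

/-- The second Drinfeld map `_Rφ(f) = (id ⊗ f)(R₂₁ R)`. -/
def phiR' (R : A ⊗[k] A) (f : Module.Dual k A) : A :=
  (TensorProduct.rid k A) (LinearMap.lTensor A f (Qmat k A R))

variable {k A} in
/-- The monodromy `c_{W,V} ∘ c_{V,W}`, i.e. the action of `Q = R₂₁R`, is the
identity on `V ⊗ W`: the two representations centralize each other. -/
def QactsTrivially {V W : Type*} [AddCommGroup V] [Module k V] [AddCommGroup W] [Module k W]
    (R : A ⊗[k] A) (ρ : A →ₐ[k] Module.End k V) (σ : A →ₐ[k] Module.End k W) : Prop :=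
  (TensorProduct.homTensorHomMap (RingHom.id k) V W V W)
    (TensorProduct.map ρ.toLinearMap σ.toLinearMap (Qmat k A R)) = LinearMap.id

variable {k A} in
/-- A subset of `A` acts through the counit in a representation; for a left
normal coideal subalgebra `L` this says the module lies in `Rep(A//L)`. -/
def ActsTriviallyOn {V : Type*} [AddCommGroup V] [Module k V]
    (ρ : A →ₐ[k] Module.End k V) (L : Set A) : Prop :=
  ∀ l ∈ L, ρ l = (Coalgebra.counit (R := k) l) • (1 : Module.End k V)

variable {k A} in
/-- The character of a finite-dimensional representation. -/
def char {V : Type*} [AddCommGroup V] [Module k V]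
    (ρ : A →ₐ[k] Module.End k V) : Module.Dual k A :=
  (LinearMap.trace k V) ∘ₗ ρ.toLinearMap

end Burciu
end

open Burciu
open scoped TensorProduct

set_option synthInstance.maxHeartbeats 400000
set_option maxHeartbeats 1000000

section Aux
open Coalgebra
variable {k : Type*} [Field k] {A : Type*} [Ring A] [HopfAlgebra k A]

private lemma burciu_triple (g : A →ₗ[k] A) (z : A ⊗[k] (A ⊗[k] A)) :
    LinearMap.mul' k A (LinearMap.rTensor A (LinearMap.mul' k A)
      (LinearMap.rTensor A (LinearMap.lTensor A g)
        ((TensorProduct.assoc k A A A).symm z)))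
    = LinearMap.mul' k A (LinearMap.lTensor A
        ((LinearMap.mul' k A) ∘ₗ (LinearMap.rTensor A g)) z) := by
  induction z using TensorProduct.induction_on with
  | zero => simp only [map_zero]
  | tmul a w =>
    induction w using TensorProduct.induction_on with
    | zero => simp only [TensorProduct.tmul_zero, map_zero]
    | tmul b c =>
      simp only [TensorProduct.assoc_symm_tmul, LinearMap.rTensor_tmul,
        LinearMap.lTensor_tmul, LinearMap.mul'_apply, LinearMap.comp_apply, mul_assoc]
    | add x y hx hy =>
      simp only [TensorProduct.tmul_add, map_add] at *; rw [hx, hy]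
  | add x y hx hy => simp only [map_add] at *; rw [hx, hy]

private lemma burciu_adL_apply_eq (m a : A) :
    adL k A (a ⊗ₜ[k] m)
      = LinearMap.mul' k A (LinearMap.lTensor A
          ((LinearMap.mulLeft k m) ∘ₗ HopfAlgebra.antipode (R := k))
          (Coalgebra.comul (R := k) a)) := by
  simp only [adL, LinearMap.comp_apply, LinearEquiv.coe_coe,
    LinearMap.rTensor_tmul]
  generalize Coalgebra.comul (R := k) a = y
  induction y using TensorProduct.induction_on with
  | zero => simp only [map_zero, TensorProduct.zero_tmul]
  | tmul b c =>
    simp only [TensorProduct.assoc_tmul, LinearMap.lTensor_tmul,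
      TensorProduct.comm_tmul, LinearMap.mul'_apply, LinearEquiv.coe_coe,
      LinearMap.comp_apply, LinearMap.mulLeft_apply, mul_assoc]
  | add x y hx hy =>
    simp only [TensorProduct.add_tmul, map_add] at *; rw [hx, hy]

/-- Key Sweedler computation: `l * m = (l₁ m S(l₂)) l₃`. -/
private lemma burciu_key (m l : A) :
    l * m = LinearMap.mul' k A (LinearMap.rTensor A
      ((adL k A) ∘ₗ (TensorProduct.mk k A A).flip m) (Coalgebra.comul (R := k) l)) := by
  have hf : (adL k A) ∘ₗ (TensorProduct.mk k A A).flip m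
      = (LinearMap.mul' k A) ∘ₗ (LinearMap.lTensor A
          ((LinearMap.mulLeft k m) ∘ₗ HopfAlgebra.antipode (R := k))) ∘ₗ
        (Coalgebra.comul (R := k)) := by
    ext a
    simpa using burciu_adL_apply_eq m a
  rw [hf]
  rw [LinearMap.rTensor_comp, LinearMap.rTensor_comp, LinearMap.comp_apply,
    LinearMap.comp_apply, ← Coalgebra.coassoc_symm_apply, burciu_triple]
  rw [← LinearMap.comp_apply (LinearMap.lTensor A _), ← LinearMap.lTensor_comp]
  have hg : (LinearMap.mul' k A ∘ₗ LinearMap.rTensor A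
        ((LinearMap.mulLeft k m) ∘ₗ HopfAlgebra.antipode (R := k))) ∘ₗ
        (Coalgebra.comul (R := k) (A := A))
      = (LinearMap.mulLeft k m) ∘ₗ (Algebra.linearMap k A) ∘ₗ
          (Coalgebra.counit (R := k) (A := A)) := by
    have h1 : LinearMap.mul' k A ∘ₗ LinearMap.rTensor A
        ((LinearMap.mulLeft k m) ∘ₗ HopfAlgebra.antipode (R := k))
        = (LinearMap.mulLeft k m) ∘ₗ LinearMap.mul' k A ∘ₗ
            LinearMap.rTensor A (HopfAlgebra.antipode (R := k)) := by
      rw [LinearMap.rTensor_comp]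
      ext a b
      simp [mul_assoc]
    rw [h1, LinearMap.comp_assoc, LinearMap.comp_assoc,
      HopfAlgebra.mul_antipode_rTensor_comul]
  rw [hg]
  have hcu := Coalgebra.lTensor_counit_comul (R := k) l
  rw [LinearMap.lTensor_comp, LinearMap.lTensor_comp, LinearMap.comp_apply,
    LinearMap.comp_apply, hcu]
  simp

private lemma burciu_mul_le_swap (L M : Subalgebra k A) (hL : IsLNCS L) (hM : IsLNCS M) :
    Subalgebra.toSubmodule L * Subalgebra.toSubmodule M ≤
      Subalgebra.toSubmodule M * Subalgebra.toSubmodule L := by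
  rw [Submodule.mul_le]
  intro l hl m hm
  obtain ⟨t, ht⟩ := hL.1 l hl
  have hmem : ∀ t : A ⊗[k] (Subalgebra.toSubmodule L),
      LinearMap.mul' k A (LinearMap.rTensor A
        ((adL k A) ∘ₗ (TensorProduct.mk k A A).flip m)
        (LinearMap.lTensor A (Subalgebra.toSubmodule L).subtype t)) ∈
        Subalgebra.toSubmodule M * Subalgebra.toSubmodule L := by
    intro t
    induction t using TensorProduct.induction_on with
    | zero => simp only [map_zero]; exact zero_mem _
    | tmul a l' =>
      simp only [LinearMap.lTensor_tmul, LinearMap.rTensor_tmul,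
        LinearMap.mul'_apply, LinearMap.comp_apply, TensorProduct.mk_apply,
        LinearMap.flip_apply, Submodule.coe_subtype]
      exact Submodule.mul_mem_mul (hM.2 a m hm) l'.2
    | add x y hx hy => simp only [map_add]; exact add_mem hx hy
  rw [burciu_key (k := k) m l, ← ht]
  exact hmem t

end Aux

/-- For left normal coideal subalgebras `L, M` of a Hopf
algebra `A`, one has `LM = ML` as subspaces of `A`. -/
theorem product_of_left_normal_coideal_subalgebras_comm
    {k : Type*} [Field k] {A : Type*} [Ring A] [HopfAlgebra k A]
    (L M : Subalgebra k A) (hL : IsLNCS L) (hM : IsLNCS M) :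
    Subalgebra.toSubmodule L * Subalgebra.toSubmodule M =
      Subalgebra.toSubmodule M * Subalgebra.toSubmodule L :=
  le_antisymm (burciu_mul_le_swap L M hL hM) (burciu_mul_le_swap M L hM hL)
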